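/- Let C be a bounded closed convex subset of a Hilbert space H and T : C → C a (b, k)-enriched strictly pseudocontractive and demicompact mapping. Then Fix(T) ≠ ∅ and for any x_0 ∈ C and γ of the form γ = λμt with λ = 1/(b+1), μ ∈ (0,1), t ∈ (0, 1 − k), the iteration x_{n+1} = (1 − γ)x_n + γ T x_n converges strongly to a fixed point of T. -/

import Mathlib

open Filter
open scoped Topology

private lemma norm_convex_comb_sq {H : Type*} [NormedAddCommGroup H] [InnerProductSpace ℝ H]
    (α : ℝ) (a c : H) :
    ‖(1-α)•a + α•c‖^2 = (1-α)*‖a‖^2 + α*‖c‖^2 - α*(1-α)*‖a-c‖^2 := by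
  simp only [← real_inner_self_eq_norm_sq, inner_add_left, inner_add_right,
    inner_sub_left, inner_sub_right, real_inner_smul_left, real_inner_smul_right]
  rw [real_inner_comm c a]
  ring

private lemma le_of_sq_le_sq' {e f : ℝ} (h : e^2 ≤ f^2) (hf : 0 ≤ f) : e ≤ f :=
  calc e ≤ |e| := le_abs_self e
    _ = Real.sqrt (e^2) := (Real.sqrt_sq_eq_abs e).symm
    _ ≤ Real.sqrt (f^2) := Real.sqrt_le_sqrt h
    _ = f := Real.sqrt_sq hf

private lemma antitone_tendsto_zero_of_subseq (a : ℕ → ℝ)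
    (hmono : ∀ n, a (n+1) ≤ a n) (h0 : ∀ n, 0 ≤ a n)
    (φ : ℕ → ℕ) (hφ : StrictMono φ)
    (h : Tendsto (fun n => a (φ n)) atTop (𝓝 0)) :
    Tendsto a atTop (𝓝 0) := by
  have hanti : Antitone a := antitone_nat_of_succ_le hmono
  rw [Metric.tendsto_atTop] at h ⊢
  intro ε hε
  obtain ⟨N, hN⟩ := h ε hε
  refine ⟨φ N, fun n hn => ?_⟩
  have h1 := hN N le_rfl
  rw [Real.dist_eq, sub_zero, abs_of_nonneg (h0 _)] at h1 ⊢
  exact lt_of_le_of_lt (hanti hn) h1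

set_option maxHeartbeats 1000000 in
theorem enriched_krasnoselskij_strong_convergence
    {H : Type*} [NormedAddCommGroup H] [InnerProductSpace ℝ H] [CompleteSpace H]
    (C : Set H) (hCb : Bornology.IsBounded C) (hCc : IsClosed C) (hC : Convex ℝ C)
    (hCne : C.Nonempty)
    (T : H → H) (hT : Set.MapsTo T C C)
    (b k : ℝ) (hb : 0 ≤ b) (hk0 : 0 ≤ k) (hk1 : k < 1)
    (hespc : ∀ x ∈ C, ∀ y ∈ C,
      ‖b • (x - y) + (T x - T y)‖ ^ 2 ≤
        (b + 1) ^ 2 * ‖x - y‖ ^ 2 + k * ‖x - y - (T x - T y)‖ ^ 2)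
    (hdemi : ∀ u : ℕ → H, (∀ n, u n ∈ C) → Bornology.IsBounded (Set.range u) →
      (∃ L, Tendsto (fun n => T (u n) - u n) atTop (𝓝 L)) →
      ∃ φ : ℕ → ℕ, StrictMono φ ∧ ∃ q, Tendsto (fun n => u (φ n)) atTop (𝓝 q)) :
    (∃ p ∈ C, T p = p) ∧
      ∀ (γ μ t : ℝ), 0 < μ → μ < 1 → 0 < t → t < 1 - k →
        γ = (1 / (b + 1)) * μ * t →
        ∀ (x : ℕ → H), x 0 ∈ C →
          (∀ n, x (n + 1) = (1 - γ) • x n + γ • T (x n)) →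
          ∃ q ∈ C, T q = q ∧ Tendsto x atTop (𝓝 q) := by
  have hb1 : (0:ℝ) < b + 1 := by linarith
  obtain ⟨l, hl_def⟩ : ∃ y : ℝ, y = 1 / (b + 1) := ⟨_, rfl⟩
  have hl0 : 0 < l := by rw [hl_def]; positivity
  have hl1 : l ≤ 1 := by rw [hl_def, div_le_one hb1]; linarith
  have hlb : (b + 1) * l = 1 := by rw [hl_def]; field_simp
  have hb1l : (b + 1) * (1 - l) = b := by rw [hl_def]; field_simp; ring
  obtain ⟨S, hS_def⟩ : ∃ S : H → H, S = fun z => (1 - l) • z + l • T z := ⟨_, rfl⟩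
  have hSC : ∀ x ∈ C, S x ∈ C := by
    intro x hx
    simp only [hS_def]
    exact hC hx (hT hx) (by linarith) hl0.le (by ring)
  have hTS : ∀ z : H, T z - z = (b + 1) • (S z - z) := by
    intro z
    have h1 : S z - z = l • (T z - z) := by simp only [hS_def]; module
    rw [h1, smul_smul, hlb, one_smul]
  have hSsub : ∀ x y : H, (b+1) • (S x - S y) = b • (x - y) + (T x - T y) := by
    intro x y
    have h1 : S x - S y = (1-l) • (x - y) + l • (T x - T y) := by simp only [hS_def]; module
    rw [h1, smul_add, smul_smul, smul_smul, hb1l, hlb, one_smul]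
  have hSsub2 : ∀ x y : H, (b+1) • ((x - S x) - (y - S y)) = x - y - (T x - T y) := by
    intro x y
    have h1 : (x - S x) - (y - S y) = l • ((x - y) - (T x - T y)) := by
      simp only [hS_def]; module
    rw [h1, smul_smul, hlb, one_smul]
  have hnsq : ∀ v : H, ‖(b+1) • v‖^2 = (b+1)^2 * ‖v‖^2 := by
    intro v; rw [norm_smul, Real.norm_eq_abs, abs_of_pos hb1, mul_pow]
  have hb2 : (0:ℝ) < (b+1)^2 := by positivity
  -- S is k-strictly pseudocontractive on C
  have hSspc : ∀ x ∈ C, ∀ y ∈ C,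
      ‖S x - S y‖^2 ≤ ‖x - y‖^2 + k * ‖(x - S x) - (y - S y)‖^2 := by
    intro x hx y hy
    have h1 := hespc x hx y hy
    rw [← hSsub x y, ← hSsub2 x y, hnsq, hnsq] at h1
    have h2 : (b+1)^2 * ‖S x - S y‖^2
        ≤ (b+1)^2 * (‖x - y‖^2 + k * ‖(x - S x) - (y - S y)‖^2) := by
      calc (b+1)^2 * ‖S x - S y‖^2 ≤ _ := h1
        _ = (b+1)^2 * (‖x - y‖^2 + k * ‖(x - S x) - (y - S y)‖^2) := by ring
    exact le_of_mul_le_mul_left h2 hb2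
  -- two-variable descent inequality
  have hdesc : ∀ α : ℝ, 0 ≤ α → α ≤ 1 → ∀ x ∈ C, ∀ y ∈ C,
      ‖((1-α)•x + α•S x) - ((1-α)•y + α•S y)‖^2 ≤
        ‖x - y‖^2 - α*(1-k-α)*‖(x - S x) - (y - S y)‖^2 := by
    intro α hα0 hα1 x hx y hy
    have he : ((1-α)•x + α•S x) - ((1-α)•y + α•S y) = (1-α)•(x-y) + α•(S x - S y) := by
      module
    rw [he, norm_convex_comb_sq]
    have h1 := hSspc x hx y hy
    have h2 : (x - y) - (S x - S y) = (x - S x) - (y - S y) := by abel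
    rw [h2]
    nlinarith [h1, mul_le_mul_of_nonneg_left h1 hα0]
  -- fixed point version of descent
  have hdesc_fix : ∀ α : ℝ, 0 ≤ α → α ≤ 1 → ∀ p ∈ C, S p = p → ∀ x ∈ C,
      ‖((1-α)•x + α•S x) - p‖^2 ≤ ‖x - p‖^2 - α*(1-k-α)*‖x - S x‖^2 := by
    intro α hα0 hα1 p hp hfp x hx
    have h1 := hdesc α hα0 hα1 x hx p hp
    rw [hfp] at h1
    have hpp : (1-α)•p + α•p = p := by module
    rw [hpp, sub_self, sub_zero] at h1
    exact h1
  -- Lipschitz bound for S on C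
  have hkpos : (0:ℝ) < 1 - k := by linarith
  have hSlip : ∀ x ∈ C, ∀ y ∈ C, ‖S x - S y‖ ≤ ((1+k)/(1-k)) * ‖x - y‖ := by
    intro x hx y hy
    have h1 := hSspc x hx y hy
    have h2 : ‖(x - S x) - (y - S y)‖ ≤ ‖x - y‖ + ‖S x - S y‖ := by
      have h3 : (x - S x) - (y - S y) = (x - y) - (S x - S y) := by abel
      rw [h3]; exact norm_sub_le _ _
    have h3 : ‖(x - S x) - (y - S y)‖^2 ≤ (‖x - y‖ + ‖S x - S y‖)^2 :=
      pow_le_pow_left₀ (norm_nonneg _) h2 2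
    rw [div_mul_eq_mul_div, le_div_iff₀ hkpos]
    nlinarith [h1, h3, norm_nonneg (x - y), norm_nonneg (S x - S y),
      mul_nonneg (norm_nonneg (x - y)) (norm_nonneg (S x - S y)),
      mul_le_mul_of_nonneg_left h3 hk0, sq_nonneg (‖x - y‖ + ‖S x - S y‖),
      sq_nonneg (‖x - y‖ - ‖S x - S y‖)]
  -- Lipschitz bound for T on C
  obtain ⟨M, hM_def⟩ : ∃ y : ℝ, y = (b+1) * ((1+k)/(1-k)) + b := ⟨_, rfl⟩
  have hTlip : ∀ x ∈ C, ∀ y ∈ C, ‖T x - T y‖ ≤ M * ‖x - y‖ := by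
    intro x hx y hy
    have h0 := hSsub x y
    have h1 : T x - T y = (b+1) • (S x - S y) - b • (x - y) := by rw [h0]; abel
    calc ‖T x - T y‖ ≤ ‖(b+1) • (S x - S y)‖ + ‖b • (x-y)‖ := by
            rw [h1]; exact norm_sub_le _ _
      _ = (b+1)*‖S x - S y‖ + b*‖x-y‖ := by
            rw [norm_smul, norm_smul, Real.norm_eq_abs, Real.norm_eq_abs,
              abs_of_pos hb1, abs_of_nonneg hb]
      _ ≤ (b+1)*(((1+k)/(1-k))*‖x-y‖) + b*‖x-y‖ :=
            add_le_add (mul_le_mul_of_nonneg_left (hSlip x hx y hy) hb1.le) le_rfl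
      _ = M * ‖x-y‖ := by rw [hM_def]; ring
  obtain ⟨R, hR⟩ := hCb.exists_norm_le
  have hR0 : 0 ≤ R := le_trans (norm_nonneg _) (hR _ hCne.choose_spec)
  -- demicompactness extraction towards a fixed point
  have hfix : ∀ u : ℕ → H, (∀ n, u n ∈ C) →
      Tendsto (fun n => T (u n) - u n) atTop (𝓝 0) →
      ∃ q ∈ C, T q = q ∧ ∃ φ : ℕ → ℕ, StrictMono φ ∧
        Tendsto (fun n => u (φ n)) atTop (𝓝 q) := by
    intro u huC hu0
    have hbd : Bornology.IsBounded (Set.range u) :=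
      hCb.subset (Set.range_subset_iff.mpr huC)
    obtain ⟨φ, hφ, q, hq⟩ := hdemi u huC hbd ⟨0, hu0⟩
    have hqC : q ∈ C := hCc.mem_of_tendsto hq (Eventually.of_forall fun n => huC (φ n))
    have hsub : Tendsto (fun n => T (u (φ n)) - u (φ n)) atTop (𝓝 0) :=
      hu0.comp hφ.tendsto_atTop
    have hTu : Tendsto (fun n => T (u (φ n))) atTop (𝓝 (T q)) := by
      rw [tendsto_iff_norm_sub_tendsto_zero]
      have hnq : Tendsto (fun n => ‖u (φ n) - q‖) atTop (𝓝 0) :=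
        tendsto_iff_norm_sub_tendsto_zero.mp hq
      have g0 : Tendsto (fun n => M * ‖u (φ n) - q‖) atTop (𝓝 0) := by
        simpa using hnq.const_mul M
      exact squeeze_zero (fun n => norm_nonneg _)
        (fun n => hTlip _ (huC _) q hqC) g0
    have h2 : Tendsto (fun n => T (u (φ n)) - u (φ n)) atTop (𝓝 (T q - q)) := hTu.sub hq
    have h3 : T q - q = 0 := tendsto_nhds_unique h2 hsub
    exact ⟨q, hqC, by rwa [sub_eq_zero] at h3, φ, hφ, hq⟩
  -- Existence of a fixed point
  obtain ⟨w, hw⟩ := hCne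
  obtain ⟨α0, hα0_def⟩ : ∃ y : ℝ, y = (1-k)/2 := ⟨_, rfl⟩
  have hα00 : 0 < α0 := by rw [hα0_def]; linarith
  have hα01 : α0 ≤ 1 := by rw [hα0_def]; linarith
  obtain ⟨G, hG_def⟩ : ∃ G : H → H, G = fun z => (1-α0) • z + α0 • S z := ⟨_, rfl⟩
  have hGC : ∀ x ∈ C, G x ∈ C := by
    intro x hx
    simp only [hG_def]
    exact hC hx (hSC x hx) (by linarith) hα00.le (by ring)
  have hGne : ∀ x ∈ C, ∀ y ∈ C, ‖G x - G y‖ ≤ ‖x - y‖ := by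
    intro x hx y hy
    have h1 := hdesc α0 hα00.le hα01 x hx y hy
    have h2 : ‖G x - G y‖^2 ≤ ‖x - y‖^2 := by
      have h3 : 0 ≤ α0*(1-k-α0)*‖(x - S x) - (y - S y)‖^2 := by
        apply mul_nonneg (mul_nonneg hα00.le (by rw [hα0_def]; linarith)) (sq_nonneg _)
      simp only [hG_def]
      linarith
    exact le_of_sq_le_sq' h2 (norm_nonneg _)
  haveI : Nonempty C := ⟨⟨w, hw⟩⟩
  haveI : CompleteSpace C := hCc.completeSpace_coe
  have hBanach : ∀ n : ℕ, ∃ zz ∈ C, zz = (1/((n:ℝ)+2)) • w + (1 - 1/((n:ℝ)+2)) • G zz := by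
    intro n
    obtain ⟨t, ht_def⟩ : ∃ y : ℝ, y = 1/((n:ℝ)+2) := ⟨_, rfl⟩
    have hn2 : (0:ℝ) < (n:ℝ) + 2 := by positivity
    have ht0 : 0 < t := by rw [ht_def]; positivity
    have ht1 : t ≤ 1 := by
      rw [ht_def, div_le_one hn2]
      have := Nat.cast_nonneg (α := ℝ) n
      linarith
    have hmem : ∀ zz : C, t • w + (1-t) • G (zz : H) ∈ C := fun zz =>
      hC hw (hGC _ zz.2) ht0.le (by linarith) (by ring)
    obtain ⟨f, hf_def⟩ : ∃ f : C → C, ∀ zz : C, (f zz : H) = t • w + (1-t) • G (zz : H) :=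
      ⟨fun zz => ⟨t • w + (1-t) • G (zz : H), hmem zz⟩, fun _ => rfl⟩
    have h1t : (0:ℝ) ≤ 1 - t := by linarith
    have hlip : LipschitzWith (Real.toNNReal (1-t)) f := by
      apply LipschitzWith.of_dist_le_mul
      intro a c
      have hd1 : dist (f a) (f c) = ‖(1-t) • (G (a:H) - G (c:H))‖ := by
        rw [Subtype.dist_eq, dist_eq_norm, hf_def a, hf_def c]
        congr 1
        module
      rw [hd1, norm_smul, Real.norm_eq_abs, abs_of_nonneg h1t,
        Real.coe_toNNReal _ h1t, Subtype.dist_eq, dist_eq_norm]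
      exact mul_le_mul_of_nonneg_left (hGne _ a.2 _ c.2) h1t
    have hcon : ContractingWith (Real.toNNReal (1-t)) f := by
      constructor
      · rw [← NNReal.coe_lt_coe, Real.coe_toNNReal _ h1t]
        push_cast
        linarith
      · exact hlip
    let z0 : C := ContractingWith.fixedPoint f hcon
    have hz0 : f z0 = z0 := hcon.fixedPoint_isFixedPt
    refine ⟨(z0 : H), z0.2, ?_⟩
    have h2 := congrArg Subtype.val hz0
    rw [hf_def z0] at h2
    rw [← ht_def]
    exact h2.symm
  choose z hzC hz using hBanach
  have hz2 : ∀ n : ℕ, z n - G (z n) = (1/((n:ℝ)+2)) • (w - G (z n)) := by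
    intro n
    calc z n - G (z n)
        = ((1/((n:ℝ)+2)) • w + (1 - 1/((n:ℝ)+2)) • G (z n)) - G (z n) := by rw [← hz n]
      _ = (1/((n:ℝ)+2)) • (w - G (z n)) := by module
  have hzG : ∀ v : H, v - G v = α0 • (v - S v) := by
    intro v; simp only [hG_def]; module
  have hTz : ∀ v : H, T v - v = ((b+1)/α0) • (G v - v) := by
    intro v
    have h4 : G v - v = α0 • (S v - v) := by
      calc G v - v = -(v - G v) := by abel
        _ = -(α0 • (v - S v)) := by rw [hzG v]
        _ = α0 • (S v - v) := by rw [← smul_neg, neg_sub]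
    rw [hTS v, h4, smul_smul]
    congr 1
    field_simp
  have hba0 : (0:ℝ) ≤ (b+1)/α0 := div_nonneg hb1.le hα00.le
  have htendz : Tendsto (fun n => T (z n) - z n) atTop (𝓝 0) := by
    rw [tendsto_zero_iff_norm_tendsto_zero]
    have hg : Tendsto (fun n : ℕ => ((b+1)/α0 * (R + R)) * (1/((n:ℝ)+2))) atTop (𝓝 0) := by
      have h1 : Tendsto (fun n : ℕ => (n:ℝ)+2) atTop atTop :=
        tendsto_atTop_add_const_right atTop 2 tendsto_natCast_atTop_atTop
      have h2 := h1.inv_tendsto_atTop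
      simpa [one_div] using h2.const_mul ((b+1)/α0 * (R + R))
    apply squeeze_zero (fun n => norm_nonneg _) ?_ hg
    intro n
    rw [hTz (z n), norm_smul, Real.norm_eq_abs, abs_of_nonneg hba0]
    have h5 : (0:ℝ) ≤ 1/((n:ℝ)+2) := by positivity
    have h3 : ‖G (z n) - z n‖ = (1/((n:ℝ)+2)) * ‖w - G (z n)‖ := by
      rw [norm_sub_rev, hz2 n, norm_smul, Real.norm_eq_abs, abs_of_nonneg h5]
    rw [h3]
    have h4 : ‖w - G (z n)‖ ≤ R + R :=
      le_trans (norm_sub_le _ _) (add_le_add (hR w hw) (hR _ (hGC _ (hzC n))))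
    calc (b+1)/α0 * ((1/((n:ℝ)+2)) * ‖w - G (z n)‖)
        ≤ (b+1)/α0 * ((1/((n:ℝ)+2)) * (R+R)) :=
          mul_le_mul_of_nonneg_left (mul_le_mul_of_nonneg_left h4 h5) hba0
      _ = ((b+1)/α0 * (R+R)) * (1/((n:ℝ)+2)) := by ring
  have hexists : ∃ p ∈ C, T p = p := by
    obtain ⟨p, hpC, hpT, _⟩ := hfix z hzC htendz
    exact ⟨p, hpC, hpT⟩
  refine ⟨hexists, ?_⟩
  -- Part 2: the iteration
  intro γ μ t hμ0 hμ1 ht0 ht1 hγ x hx0 hrec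
  obtain ⟨α, hα_def⟩ : ∃ y : ℝ, y = μ * t := ⟨_, rfl⟩
  have hα0 : 0 < α := by rw [hα_def]; exact mul_pos hμ0 ht0
  have hα1k : α < 1 - k := by
    rw [hα_def]
    nlinarith
  have hα1 : α ≤ 1 := by linarith
  have hγα : γ = l * α := by rw [hγ, hα_def, hl_def]; ring
  have hrec' : ∀ n, x (n+1) = (1-α) • x n + α • S (x n) := by
    intro n
    rw [hrec n, hγα]
    simp only [hS_def]
    module
  have hxC : ∀ n, x n ∈ C := by
    intro n
    induction n with
    | zero => exact hx0
    | succ n ih => rw [hrec' n]; exact hC ih (hSC _ ih) (by linarith) hα0.le (by ring)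
  obtain ⟨p, hpC, hpT⟩ := hexists
  have hpS : S p = p := by simp only [hS_def, hpT]; module
  obtain ⟨c, hc_def⟩ : ∃ y : ℝ, y = α * (1 - k - α) := ⟨_, rfl⟩
  have hc0 : 0 < c := by rw [hc_def]; exact mul_pos hα0 (by linarith)
  have hkey : ∀ n, ‖x (n+1) - p‖^2 ≤ ‖x n - p‖^2 - c * ‖x n - S (x n)‖^2 := by
    intro n
    rw [hrec' n, hc_def]
    exact hdesc_fix α hα0.le hα1 p hpC hpS (x n) (hxC n)
  obtain ⟨d, hd_def⟩ : ∃ d : ℕ → ℝ, d = fun n => ‖x n - S (x n)‖^2 := ⟨_, rfl⟩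
  have hdsum : ∀ n, ∑ i ∈ Finset.range n, d i ≤ ‖x 0 - p‖^2 / c := by
    intro n
    have h1 : c * ∑ i ∈ Finset.range n, d i ≤ ‖x 0 - p‖^2 - ‖x n - p‖^2 := by
      induction n with
      | zero => simp
      | succ m ih =>
        rw [Finset.sum_range_succ, mul_add]
        have h2 := hkey m
        simp only [hd_def]
        simp only [hd_def] at ih
        linarith
    rw [le_div_iff₀ hc0]
    nlinarith [sq_nonneg ‖x n - p‖]
  have hdsummable : Summable d := summable_of_sum_range_le (fun n => by rw [hd_def]; exact sq_nonneg _) hdsum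
  have hd0 : Tendsto d atTop (𝓝 0) := hdsummable.tendsto_atTop_zero
  have hnorm0 : Tendsto (fun n => ‖x n - S (x n)‖) atTop (𝓝 0) := by
    have h := (Real.continuous_sqrt.tendsto 0).comp hd0
    simp only [Function.comp_def, hd_def, Real.sqrt_sq_eq_abs, abs_norm, Real.sqrt_zero] at h
    exact h
  have hTx0 : Tendsto (fun n => T (x n) - x n) atTop (𝓝 0) := by
    rw [tendsto_zero_iff_norm_tendsto_zero]
    have g0 : Tendsto (fun n => (b+1) * ‖x n - S (x n)‖) atTop (𝓝 0) := by
      simpa using hnorm0.const_mul (b+1)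
    apply squeeze_zero (fun n => norm_nonneg _) ?_ g0
    intro n
    rw [hTS (x n), norm_smul, Real.norm_eq_abs, abs_of_pos hb1, norm_sub_rev]
  obtain ⟨q, hqC, hqT, φ, hφ, hq⟩ := hfix x hxC hTx0
  have hqS : S q = q := by simp only [hS_def, hqT]; module
  have hmon : ∀ n, ‖x (n+1) - q‖ ≤ ‖x n - q‖ := by
    intro n
    have h2 : ‖x (n+1) - q‖^2 ≤ ‖x n - q‖^2 - α*(1-k-α) * ‖x n - S (x n)‖^2 := by
      rw [hrec' n]
      exact hdesc_fix α hα0.le hα1 q hqC hqS (x n) (hxC n)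
    have h3 : 0 ≤ α*(1-k-α) * ‖x n - S (x n)‖^2 :=
      mul_nonneg (mul_nonneg hα0.le (by linarith)) (sq_nonneg _)
    exact le_of_sq_le_sq' (by linarith) (norm_nonneg _)
  have hsubnorm : Tendsto (fun n => ‖x (φ n) - q‖) atTop (𝓝 0) :=
    tendsto_iff_norm_sub_tendsto_zero.mp hq
  have hall : Tendsto (fun n => ‖x n - q‖) atTop (𝓝 0) :=
    antitone_tendsto_zero_of_subseq _ hmon (fun n => norm_nonneg _) φ hφ hsubnorm
  exact ⟨q, hqC, hqT, tendsto_iff_norm_sub_tendsto_zero.mpr hall⟩
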